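/- Let n be a positive integer, ε_1,…,ε_n and τ positive reals, and F_1,…,F_n : ℝ → ℝ continuous. Let I ⊆ ℝ be a compact interval invariant under F = F_1∘F_2∘⋯∘F_n, i.e. F(I) ⊆ I, and define I_n = F_n(I) and I_k = F_k(I_{k+1}) for k = n−1,…,2. Let (x_1,…,x_n) solve the system ε_j x_j′(t) = −x_j(t) + F_j(x_{j+1}(t)) for 1 ≤ j ≤ n−1 and ε_n x_n′(t) = −x_n(t) + F_n(x_1(t−τ)) for t > 0, with x_1 continuous on [−τ,∞). If x_1(s) ∈ I for all s ∈ [−τ,0] and x_k(0) ∈ I_k for k = 2,…,n, then x_1(t) ∈ I and x_k(t) ∈ I_k for k = 2,…,n and all t ≥ 0. -/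

import Mathlib

/-- `tailChain F k m = F k ∘ F (k+1) ∘ ⋯ ∘ F (k+m-1)` (applying `F (k+m-1)` first). -/
def tailChain (F : ℕ → ℝ → ℝ) : ℕ → ℕ → ℝ → ℝ
  | _, 0 => id
  | k, m + 1 => F k ∘ tailChain F (k + 1) m

/-- A solution of the cyclic system in singular-perturbation form:
`εⱼ xⱼ'(t) = -xⱼ(t) + Fⱼ(x_{j+1}(t))` for `j+1 < n` and
`ε_{n-1} x_{n-1}'(t) = -x_{n-1}(t) + F_{n-1}(x₀(t-τ))` for `t > 0`,
with `x 0` continuous on `[-τ, ∞)` and all components continuous on `[0, ∞)`. -/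
def IsSingPertSolution (n : ℕ) (ε : ℕ → ℝ) (τ : ℝ) (F : ℕ → ℝ → ℝ)
    (x : ℕ → ℝ → ℝ) : Prop :=
  ContinuousOn (x 0) (Set.Ici (-τ)) ∧
  (∀ j < n, ContinuousOn (x j) (Set.Ici (0 : ℝ))) ∧
  ∀ t : ℝ, 0 < t →
    (∀ j : ℕ, j + 1 < n →
      HasDerivAt (x j) ((-x j t + F j (x (j + 1) t)) / ε j) t) ∧
    HasDerivAt (x (n - 1)) ((-x (n - 1) t + F (n - 1) (x 0 (t - τ))) / ε (n - 1)) t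

lemma tailChain_continuous (F : ℕ → ℝ → ℝ) (k m : ℕ)
    (h : ∀ j, k ≤ j → j < k + m → Continuous (F j)) :
    Continuous (tailChain F k m) := by
  induction m generalizing k with
  | zero => exact continuous_id
  | succ m ih =>
    show Continuous (F k ∘ tailChain F (k + 1) m)
    exact (h k le_rfl (by omega)).comp (ih (k + 1) (fun j h1 h2 => h j (by omega) (by omega)))

lemma tailChain_image_Icc (F : ℕ → ℝ → ℝ) (k m : ℕ) (c d : ℝ) (hcd : c ≤ d)
    (h : ∀ j, k ≤ j → j < k + m → Continuous (F j)) :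
    ∃ a b : ℝ, a ≤ b ∧ tailChain F k m '' Set.Icc c d = Set.Icc a b := by
  have hcont := tailChain_continuous F k m h
  set S := tailChain F k m '' Set.Icc c d with hS
  have hcomp : IsCompact S := (isCompact_Icc).image hcont
  have hconn : IsConnected S :=
    (isConnected_Icc hcd).image _ hcont.continuousOn
  have heq := eq_Icc_of_connected_compact hconn hcomp
  refine ⟨sInf S, sSup S, ?_, heq⟩
  have hne : S.Nonempty := ⟨tailChain F k m c, c, Set.left_mem_Icc.mpr hcd, rfl⟩
  obtain ⟨z, hz⟩ := hne
  rw [heq] at hz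
  exact hz.1.trans hz.2

lemma stay_ub {ε T b : ℝ} (hε : 0 < ε) {y g : ℝ → ℝ}
    (hy : ContinuousOn y (Set.Icc 0 T))
    (hd : ∀ t ∈ Set.Ioo (0:ℝ) T, HasDerivAt y ((-y t + g t) / ε) t)
    (hg : ∀ t ∈ Set.Ioo (0:ℝ) T, g t ≤ b)
    (h0 : y 0 ≤ b) : ∀ t ∈ Set.Icc (0:ℝ) T, y t ≤ b := by
  set w : ℝ → ℝ := fun t => Real.exp (t / ε) * (y t - b) with hw
  have hwc : ContinuousOn w (Set.Icc 0 T) :=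
    ((Real.continuous_exp.comp (continuous_id.div_const ε)).continuousOn).mul
      (hy.sub continuousOn_const)
  have hwd : ∀ t ∈ Set.Ioo (0:ℝ) T,
      HasDerivAt w (Real.exp (t / ε) * ((g t - b) / ε)) t := by
    intro t ht
    have h1 : HasDerivAt (fun s : ℝ => Real.exp (s / ε)) (Real.exp (t / ε) * (1 / ε)) t := by
      simpa using ((hasDerivAt_id t).div_const ε).exp
    have h2 := (hd t ht).sub_const b
    have h3 := h1.mul h2
    refine h3.congr_deriv ?_
    field_simp
    ring
  have hanti : AntitoneOn w (Set.Icc 0 T) := by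
    apply antitoneOn_of_deriv_nonpos (convex_Icc 0 T) hwc
    · intro t ht
      rw [interior_Icc] at ht
      exact ((hwd t ht).differentiableAt).differentiableWithinAt
    · intro t ht
      rw [interior_Icc] at ht
      rw [(hwd t ht).deriv]
      have h4 : (g t - b) / ε ≤ 0 := div_nonpos_iff.mpr (Or.inr ⟨by linarith [hg t ht], hε.le⟩)
      exact mul_nonpos_of_nonneg_of_nonpos (Real.exp_pos _).le h4
  intro t ht
  have h4 : w t ≤ w 0 := hanti (Set.left_mem_Icc.mpr (ht.1.trans ht.2)) ht ht.1
  have h5 : w 0 ≤ 0 := by simp only [hw, zero_div, Real.exp_zero, one_mul]; linarith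
  have h6 : (0:ℝ) < Real.exp (t / ε) := Real.exp_pos _
  have h7 : Real.exp (t / ε) * (y t - b) ≤ 0 := h4.trans h5
  nlinarith

lemma stay {ε T a b : ℝ} (hε : 0 < ε) {y g : ℝ → ℝ}
    (hy : ContinuousOn y (Set.Icc 0 T))
    (hd : ∀ t ∈ Set.Ioo (0:ℝ) T, HasDerivAt y ((-y t + g t) / ε) t)
    (hg : ∀ t ∈ Set.Ioo (0:ℝ) T, g t ∈ Set.Icc a b)
    (h0 : y 0 ∈ Set.Icc a b) : ∀ t ∈ Set.Icc (0:ℝ) T, y t ∈ Set.Icc a b := by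
  intro t ht
  refine ⟨?_, stay_ub hε hy hd (fun s hs => (hg s hs).2) h0.2 t ht⟩
  have hlb := stay_ub (y := fun s => -y s) (g := fun s => -g s) (b := -a) hε
    hy.neg
    (fun s hs => by
      have := (hd s hs).neg
      refine this.congr_deriv ?_
      ring)
    (fun s hs => by simpa using neg_le_neg (hg s hs).1)
    (by simpa using neg_le_neg h0.1)
    t ht
  simpa using hlb

lemma step_lemma (n : ℕ) (hn : 0 < n) (ε : ℕ → ℝ) (hε : ∀ j < n, 0 < ε j)
    (τ : ℝ) (hτ : 0 < τ) (F : ℕ → ℝ → ℝ) (hF : ∀ j < n, Continuous (F j))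
    (c d : ℝ) (hcd : c ≤ d)
    (hinv : tailChain F 0 n '' Set.Icc c d ⊆ Set.Icc c d)
    (x : ℕ → ℝ → ℝ) (hx : IsSingPertSolution n ε τ F x)
    (hxk : ∀ k : ℕ, 1 ≤ k → k < n →
      x k 0 ∈ tailChain F k (n - k) '' Set.Icc c d)
    (hx00 : x 0 0 ∈ Set.Icc c d)
    (T : ℝ) (hT : 0 ≤ T)
    (hhist : ∀ s ∈ Set.Icc (-τ) (T - τ), x 0 s ∈ Set.Icc c d) :
    ∀ t ∈ Set.Icc (0:ℝ) T,
      x 0 t ∈ Set.Icc c d ∧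
      ∀ k : ℕ, 1 ≤ k → k < n →
        x k t ∈ tailChain F k (n - k) '' Set.Icc c d := by
  -- the target set for index k
  set S : ℕ → Set ℝ := fun k =>
    if k = 0 then Set.Icc c d else tailChain F k (n - k) '' Set.Icc c d with hSdef
  -- continuity of each component on [0, T]
  have hcont : ∀ k < n, ContinuousOn (x k) (Set.Icc 0 T) :=
    fun k hk => (hx.2.1 k hk).mono Set.Icc_subset_Ici_self
  -- images of sub-chains are compact intervals
  have hIcc : ∀ k, 1 ≤ k → k < n →
      ∃ a b : ℝ, a ≤ b ∧ tailChain F k (n - k) '' Set.Icc c d = Set.Icc a b := by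
    intro k hk1 hk2
    exact tailChain_image_Icc F k (n - k) c d hcd
      (fun j h1 h2 => hF j (by omega))
  -- the base case: the last component, fed by the history
  have hlast : ∀ t ∈ Set.Icc (0:ℝ) T, x (n - 1) t ∈ S (n - 1) := by
    have hderiv : ∀ t ∈ Set.Ioo (0:ℝ) T,
        HasDerivAt (x (n - 1))
          ((-x (n - 1) t + F (n - 1) (x 0 (t - τ))) / ε (n - 1)) t :=
      fun t ht => (hx.2.2 t ht.1).2
    have hgmem : ∀ t ∈ Set.Ioo (0:ℝ) T,
        F (n - 1) (x 0 (t - τ)) ∈ F (n - 1) '' Set.Icc c d := by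
      intro t ht
      exact ⟨x 0 (t - τ), hhist (t - τ) ⟨by linarith [ht.1], by linarith [ht.2]⟩, rfl⟩
    rcases eq_or_lt_of_le (Nat.succ_le_of_lt hn) with h1 | h2
    · -- n = 1 : the last component is x 0, target is Icc c d
      have hn1 : n = 1 := h1.symm
      subst hn1
      intro t ht
      simp only [hSdef]
      norm_num
      refine stay (hε 0 (by norm_num)) (hcont 0 (by norm_num)) hderiv ?_ hx00 t ht
      intro s hs
      apply hinv
      obtain ⟨z, hz, hze⟩ := hgmem s hs
      exact ⟨z, hz, hze⟩
    · -- n ≥ 2 : the last component is x (n-1), n-1 ≥ 1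
      have hk1 : 1 ≤ n - 1 := by omega
      obtain ⟨a, b, hab, hIab⟩ := hIcc (n - 1) hk1 (by omega)
      have himg : tailChain F (n - 1) (n - (n - 1)) '' Set.Icc c d
          = F (n - 1) '' Set.Icc c d := by
        have : n - (n - 1) = 1 := by omega
        rw [this]
        show (F (n - 1) ∘ tailChain F (n - 1 + 1) 0) '' _ = _
        simp [tailChain, Set.image_comp]
      intro t ht
      simp only [hSdef, if_neg (by omega : ¬ n - 1 = 0)]
      rw [hIab]
      refine stay (hε (n - 1) (by omega)) (hcont (n - 1) (by omega)) hderiv ?_ ?_ t ht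
      · intro s hs
        rw [← hIab, himg]
        exact hgmem s hs
      · rw [← hIab]
        exact hxk (n - 1) hk1 (by omega)
  -- downward induction on k
  have hmain : ∀ j : ℕ, ∀ k : ℕ, k < n → n - k ≤ j + 1 →
      ∀ t ∈ Set.Icc (0:ℝ) T, x k t ∈ S k := by
    intro j
    induction j with
    | zero =>
      intro k hk h1 t ht
      have : k = n - 1 := by omega
      subst this
      exact hlast t ht
    | succ j ih =>
      intro k hk h2
      by_cases hcase : n - k ≤ j + 1
      · exact ih k hk hcase
      · have hk1 : k + 1 < n := by omega
        have hprev : ∀ t ∈ Set.Icc (0:ℝ) T, x (k + 1) t ∈ S (k + 1) :=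
          ih (k + 1) hk1 (by omega)
        have hderiv : ∀ t ∈ Set.Ioo (0:ℝ) T,
            HasDerivAt (x k) ((-x k t + F k (x (k + 1) t)) / ε k) t :=
          fun t ht => (hx.2.2 t ht.1).1 k hk1
        have hSk1 : S (k + 1) = tailChain F (k + 1) (n - (k + 1)) '' Set.Icc c d := by
          simp [hSdef]
        have hgmem : ∀ t ∈ Set.Ioo (0:ℝ) T,
            F k (x (k + 1) t) ∈ tailChain F k (n - k) '' Set.Icc c d := by
          intro t ht
          have hm : n - k = (n - (k + 1)) + 1 := by omega
          rw [hm]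
          show F k (x (k + 1) t) ∈ (F k ∘ tailChain F (k + 1) (n - (k + 1))) '' _
          rw [Set.image_comp]
          have := hprev t (Set.Ioo_subset_Icc_self ht)
          rw [hSk1] at this
          exact ⟨x (k + 1) t, this, rfl⟩
        rcases Nat.eq_zero_or_pos k with hk0 | hkpos
        · -- k = 0 : target is Icc c d, use invariance
          subst hk0
          intro t ht
          simp only [hSdef, if_pos rfl]
          refine stay (hε 0 hn) (hcont 0 hn) hderiv ?_ hx00 t ht
          intro s hs
          apply hinv
          simpa using hgmem s hs
        · -- k ≥ 1
          obtain ⟨a, b, hab, hIab⟩ := hIcc k hkpos hk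
          intro t ht
          simp only [hSdef, if_neg (by omega : ¬ k = 0)]
          rw [hIab]
          refine stay (hε k hk) (hcont k hk) hderiv ?_ ?_ t ht
          · intro s hs
            rw [← hIab]
            exact hgmem s hs
          · rw [← hIab]
            exact hxk k hkpos hk
  intro t ht
  constructor
  · have := hmain (n - 1) 0 hn (by omega) t ht
    simpa [hSdef] using this
  · intro k hk1 hk2
    have := hmain (n - 1) k hk2 (by omega) t ht
    have hSk : S k = tailChain F k (n - k) '' Set.Icc c d := by
      simp only [hSdef]
      rw [if_neg (by omega : ¬ k = 0)]
    rw [hSk] at this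
    exact this

/-- Lemma (invariance): if the compact interval `I = [c,d]` is invariant under
`F = F₁∘⋯∘Fₙ` and the initial data lie in `I` and in the image intervals
`I_k = (F_k∘⋯∘F_n)(I)`, then the solution stays in these sets for all `t ≥ 0`. -/
theorem invariance_of_interval_chain
    (n : ℕ) (hn : 0 < n) (ε : ℕ → ℝ) (hε : ∀ j < n, 0 < ε j)
    (τ : ℝ) (hτ : 0 < τ) (F : ℕ → ℝ → ℝ) (hF : ∀ j < n, Continuous (F j))
    (c d : ℝ) (hcd : c ≤ d)
    (hinv : tailChain F 0 n '' Set.Icc c d ⊆ Set.Icc c d)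
    (x : ℕ → ℝ → ℝ) (hx : IsSingPertSolution n ε τ F x)
    (hx0 : ∀ s ∈ Set.Icc (-τ) (0 : ℝ), x 0 s ∈ Set.Icc c d)
    (hxk : ∀ k : ℕ, 1 ≤ k → k < n →
      x k 0 ∈ tailChain F k (n - k) '' Set.Icc c d) :
    ∀ t : ℝ, 0 ≤ t →
      x 0 t ∈ Set.Icc c d ∧
      ∀ k : ℕ, 1 ≤ k → k < n →
        x k t ∈ tailChain F k (n - k) '' Set.Icc c d := by
  have hx00 : x 0 0 ∈ Set.Icc c d := hx0 0 ⟨by linarith, le_refl 0⟩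
  have hstep : ∀ m : ℕ, ∀ t ∈ Set.Icc (0:ℝ) (m * τ),
      x 0 t ∈ Set.Icc c d ∧
      ∀ k : ℕ, 1 ≤ k → k < n →
        x k t ∈ tailChain F k (n - k) '' Set.Icc c d := by
    intro m
    induction m with
    | zero =>
      intro t ht
      simp only [Nat.cast_zero, zero_mul, Set.Icc_self, Set.mem_singleton_iff] at ht
      subst ht
      exact ⟨hx00, hxk⟩
    | succ m ih =>
      have hT : (0:ℝ) ≤ (m + 1 : ℕ) * τ := by positivity
      refine step_lemma n hn ε hε τ hτ F hF c d hcd hinv x hx hxk hx00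
        ((m + 1 : ℕ) * τ) hT ?_
      intro s hs
      have hs2 : s ≤ (m : ℝ) * τ := by
        have : ((m + 1 : ℕ) : ℝ) * τ - τ = (m : ℝ) * τ := by push_cast; ring
        linarith [hs.2, this.symm.le, this.le]
      rcases le_or_gt s 0 with hcase | hcase
      · exact hx0 s ⟨hs.1, hcase⟩
      · exact (ih s ⟨hcase.le, hs2⟩).1
  intro t ht
  obtain ⟨m, hm⟩ := exists_nat_ge (t / τ)
  have htm : t ≤ (m : ℝ) * τ := by
    rw [div_le_iff₀ hτ] at hm
    linarith
  exact hstep m t ⟨ht, htm⟩
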